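/- Let h, g be non-vanishing holomorphic functions on 𝔻 with h'g never zero and ω = g'h/(h'g) a holomorphic self-map of 𝔻. Then for all z ∈ 𝔻, (1-|z|²)·| |P_{hg}(z)| - |P_f(z)| | ≤ 1, where P_{hg} = (hg)''/(hg)' and P_f = h''/h' + g'/g - conj(ω)ω'/(1-|ω|²). Hence ‖P_f‖ < ∞ iff ‖P_{hg}‖ < ∞, and in the finite case |‖P_f‖ - ‖P_{hg}‖| ≤ 1. -/

import Mathlib

open Complex Metric ComplexConjugate

private lemma moebius_denom_ne {a w : ℂ} (ha : ‖a‖ < 1) (hw : ‖w‖ < 1) :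
    (1 : ℂ) - conj a * w ≠ 0 := by
  have h1 : ‖conj a * w‖ < 1 := by
    rw [norm_mul, RCLike.norm_conj]
    nlinarith [norm_nonneg a, norm_nonneg w]
  intro hEq
  have h2 : (1:ℂ) = conj a * w := by linear_combination hEq
  rw [← h2] at h1
  simp at h1

private lemma moebius_norm_lt {a w : ℂ} (ha : ‖a‖ < 1) (hw : ‖w‖ < 1) :
    ‖(a - w) / (1 - conj a * w)‖ < 1 := by
  have hden := moebius_denom_ne ha hw
  have hpos : 0 < ‖(1:ℂ) - conj a * w‖ := norm_pos_iff.2 hden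
  rw [norm_div, div_lt_one hpos]
  have key : normSq (1 - conj a * w) - normSq (a - w)
      = (1 - normSq a) * (1 - normSq w) := by
    simp only [normSq_apply, mul_re, mul_im, sub_re, sub_im, one_re, one_im,
      conj_re, conj_im]
    ring
  have ha2 : normSq a < 1 := by
    rw [normSq_eq_norm_sq]; nlinarith [norm_nonneg a]
  have hw2 : normSq w < 1 := by
    rw [normSq_eq_norm_sq]; nlinarith [norm_nonneg w]
  have hlt : normSq (a - w) < normSq (1 - conj a * w) := by nlinarith
  have e1 : ‖a - w‖^2 = normSq (a - w) := by rw [Complex.sq_norm]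
  have e2 : ‖(1:ℂ) - conj a * w‖^2 = normSq (1 - conj a * w) := by
    rw [Complex.sq_norm]
  nlinarith [norm_nonneg (a - w), norm_nonneg ((1:ℂ) - conj a * w)]

private lemma moebius_hasDeriv (a w : ℂ) (hden : (1:ℂ) - conj a * w ≠ 0) :
    HasDerivAt (fun x => (a - x) / (1 - conj a * x))
      (((‖a‖:ℂ)^2 - 1) / (1 - conj a * w)^2) w := by
  have h1 : HasDerivAt (fun x : ℂ => a - x) (-1) w := (hasDerivAt_id w).const_sub a
  have h2 : HasDerivAt (fun x : ℂ => (1:ℂ) - conj a * x) (-(conj a)) w := by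
    simpa using ((hasDerivAt_id w).const_mul (conj a)).const_sub (1:ℂ)
  have h3 := h1.div h2 hden
  refine h3.congr_deriv (Eq.symm ?_)
  congr 1
  have hc : a * conj a = (‖a‖:ℂ)^2 := by
    rw [Complex.mul_conj, Complex.normSq_eq_norm_sq]
    push_cast
    ring
  linear_combination -hc

private lemma schwarzPick {f : ℂ → ℂ} (hd : DifferentiableOn ℂ f (ball 0 1))
    (hm : ∀ w ∈ ball (0:ℂ) 1, ‖f w‖ < 1) {z : ℂ} (hz : z ∈ ball (0:ℂ) 1) :
    (1 - ‖z‖^2) * ‖deriv f z‖ ≤ 1 - ‖f z‖^2 := by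
  have hza : ‖z‖ < 1 := mem_ball_zero_iff.1 hz
  set b := f z with hbdef
  have hb : ‖b‖ < 1 := hm z hz
  set φa : ℂ → ℂ := fun x => (z - x) / (1 - conj z * x) with hφa
  set φb : ℂ → ℂ := fun x => (b - x) / (1 - conj b * x) with hφb
  set G : ℂ → ℂ := fun x => φb (f (φa x)) with hG
  have hφa_lt : ∀ x ∈ ball (0:ℂ) 1, ‖φa x‖ < 1 := fun x hx =>
    moebius_norm_lt hza (mem_ball_zero_iff.1 hx)
  have hφa_mem : ∀ x ∈ ball (0:ℂ) 1, φa x ∈ ball (0:ℂ) 1 := fun x hx =>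
    mem_ball_zero_iff.2 (hφa_lt x hx)
  have hG_lt : ∀ x ∈ ball (0:ℂ) 1, ‖G x‖ < 1 := by
    intro x hx
    exact moebius_norm_lt hb (hm _ (hφa_mem x hx))
  have hGd : DifferentiableOn ℂ G (ball 0 1) := by
    intro x hx
    have hax : DifferentiableAt ℂ φa x :=
      (moebius_hasDeriv z x (moebius_denom_ne hza (mem_ball_zero_iff.1 hx))).differentiableAt
    have hfx : DifferentiableAt ℂ f (φa x) :=
      hd.differentiableAt (isOpen_ball.mem_nhds (hφa_mem x hx))
    have hbx : DifferentiableAt ℂ φb (f (φa x)) :=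
      (moebius_hasDeriv b (f (φa x))
        (moebius_denom_ne hb (hm _ (hφa_mem x hx)))).differentiableAt
    exact ((hbx.comp x (hfx.comp x hax))).differentiableWithinAt
  have hG0 : G 0 = 0 := by
    have : φa 0 = z := by simp [hφa]
    simp [hG, this, hφb, ← hbdef]
  have hmaps : Set.MapsTo G (ball 0 1) (ball (G 0) 1) := by
    rw [hG0]
    intro x hx
    exact mem_ball_zero_iff.2 (hG_lt x hx)
  have hbound : ‖deriv G 0‖ ≤ 1 / 1 :=
    Complex.norm_deriv_le_div_of_mapsTo_ball hGd (hmaps.mono_right ball_subset_closedBall) one_pos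
  -- compute deriv G 0
  have hφa0 : φa 0 = z := by simp [hφa]
  have ha' : HasDerivAt φa ((‖z‖:ℂ)^2 - 1) 0 := by
    have := moebius_hasDeriv z 0 (by simp : (1:ℂ) - conj z * 0 ≠ 0)
    simpa using this
  have hf' : HasDerivAt f (deriv f z) z :=
    (hd.differentiableAt (isOpen_ball.mem_nhds hz)).hasDerivAt
  have hb' : HasDerivAt φb (((‖b‖:ℂ)^2 - 1) / (1 - conj b * b)^2) b :=
    moebius_hasDeriv b b (moebius_denom_ne hb hb)
  have hf'' : HasDerivAt f (deriv f z) (φa 0) := by rwa [hφa0]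
  have hcomp1 : HasDerivAt (fun x => f (φa x)) (deriv f z * ((‖z‖:ℂ)^2 - 1)) 0 :=
    hf''.comp 0 ha'
  have hb'' : HasDerivAt φb (((‖b‖:ℂ)^2 - 1) / (1 - conj b * b)^2)
      ((fun x => f (φa x)) 0) := by
    simpa [hφa0] using hb'
  have hcomp2 : HasDerivAt G
      (((‖b‖:ℂ)^2 - 1) / (1 - conj b * b)^2 * (deriv f z * ((‖z‖:ℂ)^2 - 1))) 0 :=
    by rw [hG]; exact hb''.comp 0 hcomp1
  have hderiv : deriv G 0 =
      ((‖b‖:ℂ)^2 - 1) / (1 - conj b * b)^2 * (deriv f z * ((‖z‖:ℂ)^2 - 1)) :=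
    hcomp2.deriv
  rw [hderiv] at hbound
  have hcb : conj b * b = (‖b‖:ℂ)^2 := RCLike.conj_mul b
  have hbne : (1:ℝ) - ‖b‖^2 > 0 := by nlinarith [norm_nonneg b]
  have hzne : (1:ℝ) - ‖z‖^2 > 0 := by nlinarith [norm_nonneg z]
  have hnorm1 : ‖((‖b‖:ℂ)^2 - 1) / (1 - conj b * b)^2‖ = 1 / (1 - ‖b‖^2) := by
    rw [hcb]
    have : ((‖b‖:ℂ)^2 - 1) / (1 - (‖b‖:ℂ)^2)^2 = (((‖b‖^2 - 1) / (1 - ‖b‖^2)^2 : ℝ) : ℂ) := by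
      push_cast; ring
    rw [this, Complex.norm_real, Real.norm_eq_abs, abs_div, abs_of_neg (by nlinarith), abs_of_pos (by nlinarith)]
    rw [div_eq_div_iff (by nlinarith) (by nlinarith)]
    ring
  have hnorm2 : ‖((‖z‖:ℂ)^2 - 1)‖ = 1 - ‖z‖^2 := by
    have : ((‖z‖:ℂ)^2 - 1) = (((‖z‖^2 - 1 : ℝ)) : ℂ) := by push_cast; ring
    rw [this, Complex.norm_real, Real.norm_eq_abs, abs_of_neg (by nlinarith)]
    ring
  rw [norm_mul, norm_mul, hnorm1, hnorm2] at hbound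
  have := norm_nonneg (deriv f z)
  rw [div_mul_eq_mul_div, one_mul, div_le_div_iff₀ hbne (by norm_num)] at hbound
  nlinarith


private lemma mul_conj_eq (w : ℂ) : w * conj w = (‖w‖:ℂ)^2 := by
  rw [Complex.mul_conj, Complex.normSq_eq_norm_sq]
  push_cast
  ring

theorem preSchwarzian_norm_comparison_hg
    (h g : ℂ → ℂ)
    (hh : DifferentiableOn ℂ h (ball (0:ℂ) 1))
    (hg : DifferentiableOn ℂ g (ball (0:ℂ) 1))
    (hh0 : ∀ z ∈ ball (0:ℂ) 1, h z ≠ 0)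
    (hg0 : ∀ z ∈ ball (0:ℂ) 1, g z ≠ 0)
    (hh'g0 : ∀ z ∈ ball (0:ℂ) 1, deriv h z * g z ≠ 0)
    (ω : ℂ → ℂ)
    (hω : ∀ z ∈ ball (0:ℂ) 1, ω z = deriv g z * h z / (deriv h z * g z))
    (hωmap : ∀ z ∈ ball (0:ℂ) 1, ‖ω z‖ < 1)
    (Pf Phg : ℂ → ℂ)
    (hPf : ∀ z ∈ ball (0:ℂ) 1,
      Pf z = deriv (deriv h) z / deriv h z + deriv g z / g z -
        conj (ω z) * deriv ω z / (1 - (‖ω z‖ : ℂ)^2))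
    (hPhg : ∀ z ∈ ball (0:ℂ) 1,
      Phg z = deriv (deriv (fun w => h w * g w)) z /
        deriv (fun w => h w * g w) z) :
    (∀ z ∈ ball (0:ℂ) 1, (1 - ‖z‖^2) * |‖Phg z‖ - ‖Pf z‖| ≤ 1) ∧
    (BddAbove {y : ℝ | ∃ z ∈ ball (0:ℂ) 1, y = (1 - ‖z‖^2) * ‖Pf z‖} ↔
      BddAbove {y : ℝ | ∃ z ∈ ball (0:ℂ) 1, y = (1 - ‖z‖^2) * ‖Phg z‖}) ∧
    (BddAbove {y : ℝ | ∃ z ∈ ball (0:ℂ) 1, y = (1 - ‖z‖^2) * ‖Pf z‖} →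
      |sSup {y : ℝ | ∃ z ∈ ball (0:ℂ) 1, y = (1 - ‖z‖^2) * ‖Pf z‖} -
        sSup {y : ℝ | ∃ z ∈ ball (0:ℂ) 1, y = (1 - ‖z‖^2) * ‖Phg z‖}| ≤ 1) := by
  have hball : IsOpen (ball (0:ℂ) 1) := isOpen_ball
  have hhA : AnalyticOnNhd ℂ h (ball 0 1) := hh.analyticOnNhd hball
  have hgA : AnalyticOnNhd ℂ g (ball 0 1) := hg.analyticOnNhd hball
  have hh'A : AnalyticOnNhd ℂ (deriv h) (ball 0 1) := hhA.deriv
  have hg'A : AnalyticOnNhd ℂ (deriv g) (ball 0 1) := hgA.deriv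
  -- differentiability of ω
  have hωd : DifferentiableOn ℂ ω (ball 0 1) := by
    have hf : DifferentiableOn ℂ (fun w => deriv g w * h w / (deriv h w * g w))
        (ball 0 1) :=
      ((hg'A.differentiableOn.mul hh).div (hh'A.differentiableOn.mul hg) hh'g0)
    exact hf.congr hω
  -- pointwise difference bound
  have hpt : ∀ z ∈ ball (0:ℂ) 1, (1 - ‖z‖^2) * ‖Phg z - Pf z‖ ≤ 1 := by
    intro z hz
    have hmemz : ball (0:ℂ) 1 ∈ nhds z := hball.mem_nhds hz
    have hhd : HasDerivAt h (deriv h z) z := ((hhA z hz).differentiableAt).hasDerivAt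
    have hgd : HasDerivAt g (deriv g z) z := ((hgA z hz).differentiableAt).hasDerivAt
    have hh1d : HasDerivAt (deriv h) (deriv (deriv h) z) z :=
      ((hh'A z hz).differentiableAt).hasDerivAt
    have hg1d : HasDerivAt (deriv g) (deriv (deriv g) z) z :=
      ((hg'A z hz).differentiableAt).hasDerivAt
    have hF' : ∀ w ∈ ball (0:ℂ) 1, deriv (fun x => h x * g x) w =
        deriv h w * g w + h w * deriv g w := fun w hw =>
      (((hhA w hw).differentiableAt.hasDerivAt).mul
        ((hgA w hw).differentiableAt.hasDerivAt)).deriv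
    -- nonvanishing facts
    have hH1 : deriv h z ≠ 0 := fun hc => hh'g0 z hz (by rw [hc]; ring)
    have hG : g z ≠ 0 := hg0 z hz
    have hH : h z ≠ 0 := hh0 z hz
    have hωz := hωmap z hz
    have h1W : (1:ℂ) + ω z ≠ 0 := by
      intro hc
      have : ω z = -1 := by linear_combination hc
      rw [this] at hωz
      simp at hωz
    have h1Wc : (1:ℂ) - ω z * conj (ω z) ≠ 0 := by
      intro hc
      have h2 : ω z * conj (ω z) = 1 := by linear_combination -hc
      have h3 : ‖ω z * conj (ω z)‖ = 1 := by rw [h2]; simp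
      rw [norm_mul, RCLike.norm_conj] at h3
      nlinarith [norm_nonneg (ω z)]
    -- F' = (h' g)(1 + ω) as functions on the ball
    have hFeq2 : deriv (fun x => h x * g x) =ᶠ[nhds z]
        fun w => (deriv h w * g w) * (1 + ω w) := by
      filter_upwards [hmemz] with w hw
      rw [hF' w hw, hω w hw]
      have hDw := hh'g0 w hw
      have := hg0 w hw
      have : deriv h w ≠ 0 := left_ne_zero_of_mul hDw
      field_simp
    have hωdz : HasDerivAt ω (deriv ω z) z :=
      (hωd.differentiableAt hmemz).hasDerivAt
    have hprod : HasDerivAt (fun w => (deriv h w * g w) * (1 + ω w))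
        ((deriv (deriv h) z * g z + deriv h z * deriv g z) * (1 + ω z) +
          (deriv h z * g z) * deriv ω z) z :=
      (hh1d.mul hgd).mul (hωdz.const_add 1)
    have hF''2 : deriv (deriv (fun x => h x * g x)) z =
        (deriv (deriv h) z * g z + deriv h z * deriv g z) * (1 + ω z) +
          (deriv h z * g z) * deriv ω z := by
      rw [hFeq2.deriv_eq]
      exact hprod.deriv
    have hF'2 : deriv (fun x => h x * g x) z = (deriv h z * g z) * (1 + ω z) := by
      rw [hF' z hz, hω z hz]
      have hD := hh'g0 z hz
      field_simp
    -- key identity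
    have hkey : Phg z - Pf z =
        deriv ω z * (1 + conj (ω z)) / ((1 + ω z) * (1 - (‖ω z‖:ℂ)^2)) := by
      have hns : (1:ℂ) - (‖ω z‖:ℂ)^2 = 1 - ω z * conj (ω z) := by
        rw [mul_conj_eq]
      rw [hPhg z hz, hPf z hz, hF''2, hF'2, hns]
      field_simp [hH1, hG, h1W, h1Wc]
      ring
    -- norm of the difference
    have hωzpos : (0:ℝ) < 1 - ‖ω z‖^2 := by nlinarith [norm_nonneg (ω z)]
    have hdiff : ‖Phg z - Pf z‖ = ‖deriv ω z‖ / (1 - ‖ω z‖^2) := by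
      rw [hkey, norm_div, norm_mul, norm_mul]
      have e1 : ‖(1:ℂ) + conj (ω z)‖ = ‖(1:ℂ) + ω z‖ := by
        rw [show (1:ℂ) + conj (ω z) = conj (1 + ω z) by simp, RCLike.norm_conj]
      have e2 : ‖(1:ℂ) - (‖ω z‖:ℂ)^2‖ = 1 - ‖ω z‖^2 := by
        rw [show (1:ℂ) - (‖ω z‖:ℂ)^2 = (((1 - ‖ω z‖^2 : ℝ)) : ℂ) by push_cast; ring,
          Complex.norm_real, Real.norm_eq_abs, abs_of_pos hωzpos]
      have e3 : ‖(1:ℂ) + ω z‖ ≠ 0 := norm_ne_zero_iff.2 h1W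
      rw [e1, e2, div_eq_div_iff (mul_ne_zero e3 (ne_of_gt hωzpos)) (ne_of_gt hωzpos)]
      ring
    rw [hdiff]
    have hsp := schwarzPick hωd hωmap hz
    have hz1 : ‖z‖ < 1 := mem_ball_zero_iff.1 hz
    have hzpos : (0:ℝ) ≤ 1 - ‖z‖^2 := by nlinarith [norm_nonneg z]
    rw [mul_div_assoc] at *
    rw [← mul_div_assoc, div_le_one hωzpos]
    exact hsp
  -- part 1
  have part1 : ∀ z ∈ ball (0:ℂ) 1, (1 - ‖z‖^2) * |‖Phg z‖ - ‖Pf z‖| ≤ 1 := by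
    intro z hz
    have hzpos : (0:ℝ) ≤ 1 - ‖z‖^2 := by
      have := mem_ball_zero_iff.1 hz
      nlinarith [norm_nonneg z]
    calc (1 - ‖z‖^2) * |‖Phg z‖ - ‖Pf z‖|
        ≤ (1 - ‖z‖^2) * ‖Phg z - Pf z‖ :=
          mul_le_mul_of_nonneg_left (abs_norm_sub_norm_le _ _) hzpos
      _ ≤ 1 := hpt z hz
  set A := {y : ℝ | ∃ z ∈ ball (0:ℂ) 1, y = (1 - ‖z‖^2) * ‖Pf z‖} with hA
  set B := {y : ℝ | ∃ z ∈ ball (0:ℂ) 1, y = (1 - ‖z‖^2) * ‖Phg z‖} with hB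
  have hzpos : ∀ z ∈ ball (0:ℂ) 1, (0:ℝ) ≤ 1 - ‖z‖^2 := by
    intro z hz
    have := mem_ball_zero_iff.1 hz
    nlinarith [norm_nonneg z]
  have hBA : ∀ z ∈ ball (0:ℂ) 1,
      (1 - ‖z‖^2) * ‖Phg z‖ ≤ (1 - ‖z‖^2) * ‖Pf z‖ + 1 := by
    intro z hz
    have h1 := part1 z hz
    have h2 : (1 - ‖z‖^2) * (‖Phg z‖ - ‖Pf z‖) ≤ 1 := by
      calc (1 - ‖z‖^2) * (‖Phg z‖ - ‖Pf z‖)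
          ≤ (1 - ‖z‖^2) * |‖Phg z‖ - ‖Pf z‖| :=
            mul_le_mul_of_nonneg_left (le_abs_self _) (hzpos z hz)
        _ ≤ 1 := h1
    nlinarith
  have hAB : ∀ z ∈ ball (0:ℂ) 1,
      (1 - ‖z‖^2) * ‖Pf z‖ ≤ (1 - ‖z‖^2) * ‖Phg z‖ + 1 := by
    intro z hz
    have h1 := part1 z hz
    have h2 : (1 - ‖z‖^2) * (‖Pf z‖ - ‖Phg z‖) ≤ 1 := by
      calc (1 - ‖z‖^2) * (‖Pf z‖ - ‖Phg z‖)
          ≤ (1 - ‖z‖^2) * |‖Phg z‖ - ‖Pf z‖| := by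
            rw [abs_sub_comm]
            exact mul_le_mul_of_nonneg_left (le_abs_self _) (hzpos z hz)
        _ ≤ 1 := h1
    nlinarith
  have h0ball : (0:ℂ) ∈ ball (0:ℂ) 1 := mem_ball_self one_pos
  have hAne : A.Nonempty := ⟨_, ⟨0, h0ball, rfl⟩⟩
  have hBne : B.Nonempty := ⟨_, ⟨0, h0ball, rfl⟩⟩
  have hbddAB : BddAbove A → BddAbove B := by
    rintro ⟨M, hM⟩
    refine ⟨M + 1, ?_⟩
    rintro y ⟨z, hz, rfl⟩
    calc (1 - ‖z‖^2) * ‖Phg z‖ ≤ (1 - ‖z‖^2) * ‖Pf z‖ + 1 := hBA z hz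
      _ ≤ M + 1 := by
        have : (1 - ‖z‖^2) * ‖Pf z‖ ∈ A := ⟨z, hz, rfl⟩
        linarith [hM this]
  have hbddBA : BddAbove B → BddAbove A := by
    rintro ⟨M, hM⟩
    refine ⟨M + 1, ?_⟩
    rintro y ⟨z, hz, rfl⟩
    calc (1 - ‖z‖^2) * ‖Pf z‖ ≤ (1 - ‖z‖^2) * ‖Phg z‖ + 1 := hAB z hz
      _ ≤ M + 1 := by
        have : (1 - ‖z‖^2) * ‖Phg z‖ ∈ B := ⟨z, hz, rfl⟩
        linarith [hM this]
  refine ⟨part1, ⟨hbddAB, hbddBA⟩, ?_⟩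
  intro hbA
  have hbB : BddAbove B := hbddAB hbA
  have h1 : sSup A ≤ sSup B + 1 := by
    apply csSup_le hAne
    rintro y ⟨z, hz, rfl⟩
    calc (1 - ‖z‖^2) * ‖Pf z‖ ≤ (1 - ‖z‖^2) * ‖Phg z‖ + 1 := hAB z hz
      _ ≤ sSup B + 1 := by
        have : (1 - ‖z‖^2) * ‖Phg z‖ ∈ B := ⟨z, hz, rfl⟩
        linarith [le_csSup hbB this]
  have h2 : sSup B ≤ sSup A + 1 := by
    apply csSup_le hBne
    rintro y ⟨z, hz, rfl⟩
    calc (1 - ‖z‖^2) * ‖Phg z‖ ≤ (1 - ‖z‖^2) * ‖Pf z‖ + 1 := hBA z hz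
      _ ≤ sSup A + 1 := by
        have : (1 - ‖z‖^2) * ‖Pf z‖ ∈ A := ⟨z, hz, rfl⟩
        linarith [le_csSup hbA this]
  rw [abs_le]
  constructor <;> linarith
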